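/- Let α ∈ (0, 1/2), T > 0, η₀ ∈ ℝ, let b : ℝ → ℝ be Lipschitz and let ζ : [0,T] → ℝ be (1−α)-Hölder continuous. For ε > 0 let x^ε : [0,T] → ℝ be the unique continuous solution of x^ε_t = η₀ + ζ_t + ∫₀ᵗ [ b(x^ε_s) + (1/ε) f(x^ε_s) ] ds, and let u : [0,T] → ℝ be the unique continuous solution of u_t = η₀ + ζ_t + ∫₀ᵗ b( u_s + max_{s' ∈ [0,s]} u_{s'}⁻ ) ds. Set ũ_t = u_t + max_{s' ∈ [0,t]} u_{s'}⁻. Then ũ_t ≥ 0 for all t ∈ [0,T], and for every ε > 0 and every t ∈ [0,T] one has x^ε_t ≤ ũ_t. -/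

import Mathlib

open MeasureTheory Set Filter Topology Nat

noncomputable section

/-- `f` is `γ`-Hölder continuous on `[a,b]`. -/
def HolderOnIcc (γ a b : ℝ) (f : ℝ → ℝ) : Prop :=
  ∃ C : ℝ, 0 ≤ C ∧ ∀ s ∈ Set.Icc a b, ∀ t ∈ Set.Icc a b, |f t - f s| ≤ C * |t - s| ^ γ

/-- The penalization function `f`: a `C²_b` nonincreasing function vanishing on `[0, ∞)`
with `0 < f x ≤ x⁻` for `x < 0`. -/
def PenaltyFun (f : ℝ → ℝ) : Prop :=
  ContDiff ℝ 2 f ∧ Antitone f ∧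
  (∃ M : ℝ, ∀ x : ℝ, |deriv f x| ≤ M ∧ |deriv (deriv f) x| ≤ M) ∧
  (∀ x : ℝ, 0 ≤ x → f x = 0) ∧
  (∀ x : ℝ, x < 0 → 0 < f x ∧ f x ≤ -x)

/-- The running maximum of the negative part of `u` on `[0, s]`. -/
def runNegMax (u : ℝ → ℝ) (s : ℝ) : ℝ :=
  sSup ((fun s' => max 0 (-u s')) '' Set.Icc 0 s)

/-- An integral form of Grönwall's inequality. -/
lemma gronwall_int (K a b : ℝ) (hK : 0 ≤ K) (h : ℝ → ℝ)
    (hc : ContinuousOn h (Icc a b))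
    (hineq : ∀ r ∈ Icc a b, h r ≤ ∫ q in a..r, K * h q) :
    ∀ r ∈ Icc a b, h r ≤ 0 := by
  obtain ⟨H, hH0, hH⟩ : ∃ H : ℝ, 0 ≤ H ∧ ∀ q ∈ Icc a b, h q ≤ H := by
    obtain ⟨C, hC⟩ := (isCompact_Icc.image_of_continuousOn hc).bddAbove
    exact ⟨max C 0, le_max_right _ _, fun q hq =>
      le_trans (hC (mem_image_of_mem h hq)) (le_max_left _ _)⟩
  have key : ∀ n : ℕ, ∀ r ∈ Icc a b, h r ≤ H * (K ^ n * (r - a) ^ n / (n ! : ℝ)) := by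
    intro n
    induction n with
    | zero => intro r hr; simpa using hH r hr
    | succ n ih =>
      intro r hr
      have har : a ≤ r := hr.1
      have hsub : uIcc a r ⊆ Icc a b := by
        rw [uIcc_of_le har]; exact Icc_subset_Icc le_rfl hr.2
      have hint1 : IntervalIntegrable (fun q => K * h q) volume a r :=
        (ContinuousOn.intervalIntegrable ((continuous_const.continuousOn.mul
          (hc.mono hsub))))
      have hint2 : IntervalIntegrable
          (fun q => K * (H * (K ^ n * (q - a) ^ n / (n ! : ℝ)))) volume a r :=
        (Continuous.intervalIntegrable (by continuity) a r)
      have step : (∫ q in a..r, K * h q) ≤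
          ∫ q in a..r, K * (H * (K ^ n * (q - a) ^ n / (n ! : ℝ))) := by
        apply intervalIntegral.integral_mono_on har hint1 hint2
        intro q hq
        have hq' : q ∈ Icc a b := ⟨hq.1, le_trans hq.2 hr.2⟩
        exact mul_le_mul_of_nonneg_left (ih q hq') hK
      have hcomp : (∫ q in a..r, (q - a) ^ n) = (r - a) ^ (n + 1) / (n + 1) := by
        have := intervalIntegral.integral_comp_sub_right (fun q => q ^ n) a (a := a) (b := r)
        rw [this, sub_self, integral_pow]
        simp
      have hval : (∫ q in a..r, K * (H * (K ^ n * (q - a) ^ n / (n ! : ℝ))))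
          = H * (K ^ (n + 1) * (r - a) ^ (n + 1) / ((n + 1)! : ℝ)) := by
        have : (fun q => K * (H * (K ^ n * (q - a) ^ n / (n ! : ℝ))))
            = fun q => (K * H * K ^ n / (n ! : ℝ)) * (q - a) ^ n := by
          funext q; ring
        rw [this, intervalIntegral.integral_const_mul, hcomp, Nat.factorial_succ]
        have hn : (0:ℝ) < (n ! : ℝ) := by positivity
        push_cast
        field_simp
        ring
      calc h r ≤ ∫ q in a..r, K * h q := hineq r hr
        _ ≤ _ := step
        _ = _ := hval
  intro r hr
  have hlim : Filter.Tendsto (fun n : ℕ => H * ((K * (b - a)) ^ n / (n ! : ℝ)))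
      Filter.atTop (nhds 0) := by
    have := FloorSemiring.tendsto_pow_div_factorial_atTop (K * (b - a))
    simpa using this.const_mul H
  refine ge_of_tendsto' hlim fun n => ?_
  have h1 : K ^ n * (r - a) ^ n ≤ (K * (b - a)) ^ n := by
    rw [mul_pow]
    gcongr
    · exact sub_nonneg.2 hr.1
    · linarith [hr.2]
  calc h r ≤ H * (K ^ n * (r - a) ^ n / (n ! : ℝ)) := key n r hr
    _ ≤ H * ((K * (b - a)) ^ n / (n ! : ℝ)) := by
        have hn : (0:ℝ) < (n ! : ℝ) := by positivity
        apply mul_le_mul_of_nonneg_left _ hH0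
        gcongr

/-- Upper bound for the penalized solutions: `ũ_t = u_t + max_{s' ≤ t} u_{s'}⁻` is
nonnegative and dominates every `x^ε`. -/
theorem penalized_dominated_by_utilde
    (α T η₀ : ℝ) (hα : α ∈ Set.Ioo (0 : ℝ) (1 / 2)) (hT : 0 < T)
    (b : ℝ → ℝ) (K : NNReal) (hb : LipschitzWith K b)
    (ζ : ℝ → ℝ) (hζ : HolderOnIcc (1 - α) 0 T ζ)
    (f : ℝ → ℝ) (hf : PenaltyFun f)
    (x : ℝ → ℝ → ℝ)
    (hx_cont : ∀ ε : ℝ, 0 < ε → ContinuousOn (x ε) (Set.Icc 0 T))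
    (hx : ∀ ε : ℝ, 0 < ε → ∀ t ∈ Set.Icc 0 T,
      x ε t = η₀ + ζ t + ∫ s in (0 : ℝ)..t, (b (x ε s) + (1 / ε) * f (x ε s)))
    (u : ℝ → ℝ)
    (hu_cont : ContinuousOn u (Set.Icc 0 T))
    (hu : ∀ t ∈ Set.Icc 0 T,
      u t = η₀ + ζ t + ∫ s in (0 : ℝ)..t, b (u s + runNegMax u s)) :
    (∀ t ∈ Set.Icc 0 T, 0 ≤ u t + runNegMax u t) ∧
    (∀ ε : ℝ, 0 < ε → ∀ t ∈ Set.Icc 0 T, x ε t ≤ u t + runNegMax u t) := by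
  obtain ⟨hf1, hf2, hf3, hf4, hf5⟩ := hf
  set g : ℝ → ℝ := fun s' => max 0 (-u s') with hg_def
  have hg_cont : ContinuousOn g (Icc 0 T) := continuousOn_const.sup hu_cont.neg
  have hbdd : ∀ s ∈ Icc 0 T, BddAbove (g '' Icc 0 s) := fun s hs =>
    ((isCompact_Icc.image_of_continuousOn hg_cont).bddAbove).mono
      (image_mono (f := g) (Icc_subset_Icc le_rfl hs.2))
  have hnonempty : ∀ s ∈ Icc 0 T, (g '' Icc 0 s).Nonempty := fun s hs =>
    (nonempty_Icc.2 hs.1).image g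
  have hle : ∀ s ∈ Icc 0 T, ∀ q ∈ Icc 0 s, g q ≤ runNegMax u s := fun s hs q hq =>
    le_csSup (hbdd s hs) (mem_image_of_mem g hq)
  have hmono : ∀ p ∈ Icc 0 T, ∀ q ∈ Icc 0 T, p ≤ q → runNegMax u p ≤ runNegMax u q :=
    fun p hp q hq hpq =>
      csSup_le_csSup (hbdd q hq) (hnonempty p hp) (image_mono (f := g) (Icc_subset_Icc le_rfl hpq))
  have part1 : ∀ s ∈ Icc 0 T, 0 ≤ u s + runNegMax u s := by
    intro s hs
    have h1 : -u s ≤ runNegMax u s :=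
      le_trans (le_max_right 0 (-u s)) (hle s hs s ⟨hs.1, le_rfl⟩)
    linarith
  refine ⟨part1, ?_⟩
  -- continuity of the running maximum
  have hm_cont : ContinuousOn (runNegMax u) (Icc 0 T) := by
    rw [Metric.continuousOn_iff]
    intro s₀ hs₀ ε hε
    have huc := isCompact_Icc.uniformContinuousOn_of_continuous hg_cont
    rw [Metric.uniformContinuousOn_iff] at huc
    obtain ⟨δ, hδ, hδ'⟩ := huc (ε / 2) (by linarith)
    have keyuc : ∀ p ∈ Icc 0 T, ∀ q ∈ Icc 0 T, p ≤ q → dist q p < δ →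
        runNegMax u q ≤ runNegMax u p + ε / 2 := by
      intro p hp q hq hpq hd
      apply csSup_le (hnonempty q hq)
      rintro y ⟨r, hr, rfl⟩
      by_cases hrp : r ≤ p
      · exact le_trans (hle p hp r ⟨hr.1, hrp⟩) (by linarith [hε])
      · push_neg at hrp
        have hrT : r ∈ Icc 0 T := ⟨hr.1, le_trans hr.2 hq.2⟩
        have hdr : dist r p < δ := by
          rw [Real.dist_eq] at hd ⊢
          rw [abs_of_nonneg (by linarith [hrp.le] : (0:ℝ) ≤ r - p)]
          rw [abs_of_nonneg (by linarith [hpq] : (0:ℝ) ≤ q - p)] at hd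
          linarith [hr.2]
        have := hδ' r hrT p hp hdr
        rw [Real.dist_eq, abs_lt] at this
        have hgp : g p ≤ runNegMax u p := hle p hp p ⟨hp.1, le_rfl⟩
        linarith [this.2]
    refine ⟨δ, hδ, fun t' ht' hd => ?_⟩
    rcases le_total t' s₀ with h | h
    · have h1 : runNegMax u t' ≤ runNegMax u s₀ := hmono t' ht' s₀ hs₀ h
      have h2 : runNegMax u s₀ ≤ runNegMax u t' + ε / 2 :=
        keyuc t' ht' s₀ hs₀ h (by rwa [_root_.dist_comm] at hd)
      rw [Real.dist_eq, abs_lt]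
      constructor <;> linarith
    · have h1 : runNegMax u s₀ ≤ runNegMax u t' := hmono s₀ hs₀ t' ht' h
      have h2 : runNegMax u t' ≤ runNegMax u s₀ + ε / 2 := keyuc s₀ hs₀ t' ht' h hd
      rw [Real.dist_eq, abs_lt]
      constructor <;> linarith
  -- Part 2
  intro ε hε t ht
  have hXc : ContinuousOn (x ε) (Icc 0 T) := hx_cont ε hε
  set m := runNegMax u with hm_def
  set ut : ℝ → ℝ := fun s => u s + m s with hut_def
  have hutc : ContinuousOn ut (Icc 0 T) := hu_cont.add hm_cont
  set z : ℝ → ℝ := fun s => x ε s - ut s with hz_def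
  have hzc : ContinuousOn z (Icc 0 T) := hXc.sub hutc
  set gx : ℝ → ℝ := fun q => b (x ε q) + (1 / ε) * f (x ε q) with hgx_def
  set gu : ℝ → ℝ := fun q => b (u q + m q) with hgu_def
  have hgx_cont : ContinuousOn gx (Icc 0 T) :=
    (hb.continuous.comp_continuousOn hXc).add
      (continuousOn_const.mul (hf1.continuous.comp_continuousOn hXc))
  have hgu_cont : ContinuousOn gu (Icc 0 T) :=
    hb.continuous.comp_continuousOn (hu_cont.add hm_cont)
  have hint : ∀ (h : ℝ → ℝ), ContinuousOn h (Icc 0 T) → ∀ p ∈ Icc 0 T, ∀ q ∈ Icc 0 T,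
      IntervalIntegrable h volume p q := by
    intro h hc p hp q hq
    apply ContinuousOn.intervalIntegrable
    apply hc.mono
    rw [uIcc_eq_union]
    exact union_subset (Icc_subset_Icc hp.1 hq.2) (Icc_subset_Icc hq.1 hp.2)
  have h0T : (0:ℝ) ∈ Icc (0:ℝ) T := ⟨le_rfl, hT.le⟩
  -- the exceedance set
  set S := {s | s ∈ Icc 0 t ∧ z s ≤ 0} with hS_def
  have hz0 : z 0 ≤ 0 := by
    have hX0 : x ε 0 = η₀ + ζ 0 := by
      have := hx ε hε 0 h0T
      simpa using this
    have hu0 : u 0 = η₀ + ζ 0 := by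
      have := hu 0 h0T
      simpa using this
    have hm0 : 0 ≤ m 0 :=
      le_trans (le_max_left 0 (-u 0)) (hle 0 h0T 0 ⟨le_rfl, le_rfl⟩)
    simp only [hz_def, hut_def]
    rw [hX0, hu0]
    linarith
  have h0S : (0:ℝ) ∈ S := ⟨⟨le_rfl, ht.1⟩, hz0⟩
  have hScl : IsClosed S := by
    have : S = Icc 0 t ∩ z ⁻¹' (Iic 0) := by
      ext s; simp [hS_def, and_comm]
    rw [this]
    exact (hzc.mono (Icc_subset_Icc le_rfl ht.2)).preimage_isClosed_of_isClosed
      isClosed_Icc isClosed_Iic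
  have hSbdd : BddAbove S := ⟨t, fun s hs => hs.1.2⟩
  set s' := sSup S with hs'_def
  have hs'S : s' ∈ S := hScl.csSup_mem ⟨0, h0S⟩ hSbdd
  have hs'Icc : s' ∈ Icc 0 t := hs'S.1
  have hs'T : s' ∈ Icc 0 T := ⟨hs'Icc.1, le_trans hs'Icc.2 ht.2⟩
  have claimA : ∀ q ∈ Ioc s' t, 0 < z q := by
    intro q hq
    by_contra hcon
    push_neg at hcon
    have hqS : q ∈ S := ⟨⟨le_trans hs'Icc.1 hq.1.le, hq.2⟩, hcon⟩
    exact absurd (le_csSup hSbdd hqS) (not_le.2 hq.1)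
  -- the integral inequality on [s', t]
  have hineq : ∀ r ∈ Icc s' t, z r ≤ ∫ q in s'..r, (K : ℝ) * z q := by
    intro r hr
    have hrT : r ∈ Icc 0 T := ⟨le_trans hs'Icc.1 hr.1, le_trans hr.2 ht.2⟩
    have hIgx0r := hint gx hgx_cont 0 h0T r hrT
    have hIgx0s := hint gx hgx_cont 0 h0T s' hs'T
    have hIgu0r := hint gu hgu_cont 0 h0T r hrT
    have hIgu0s := hint gu hgu_cont 0 h0T s' hs'T
    have hIgx := hint gx hgx_cont s' hs'T r hrT
    have hIgu := hint gu hgu_cont s' hs'T r hrT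
    have e1 : x ε r - x ε s' = ζ r - ζ s' + ∫ q in s'..r, gx q := by
      have hXr := hx ε hε r hrT
      have hXs := hx ε hε s' hs'T
      have hsub := intervalIntegral.integral_interval_sub_left hIgx0r hIgx0s
      rw [hgx_def] at hsub ⊢
      rw [hXr, hXs]
      linarith [hsub]
    have e2 : u r - u s' = ζ r - ζ s' + ∫ q in s'..r, gu q := by
      have hur := hu r hrT
      have hus := hu s' hs'T
      have hsub := intervalIntegral.integral_interval_sub_left hIgu0r hIgu0s
      rw [hgu_def] at hsub ⊢
      rw [hur, hus]
      linarith [hsub]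
    have hm_mono : m s' ≤ m r := hmono s' hs'T r hrT hr.1
    have hzs' : z s' ≤ 0 := hs'S.2
    have hsplit : (∫ q in s'..r, (gx q - gu q))
        = (∫ q in s'..r, gx q) - ∫ q in s'..r, gu q :=
      intervalIntegral.integral_sub hIgx hIgu
    have key : z r ≤ ∫ q in s'..r, (gx q - gu q) := by
      have hzr : z r = x ε r - (u r + m r) := by simp [hz_def, hut_def]
      have hzs : z s' = x ε s' - (u s' + m s') := by simp [hz_def, hut_def]
      rw [hzr]
      rw [hzs] at hzs'
      linarith [e1, e2, hsplit]
    have hpt : ∀ q ∈ Ioc s' r, gx q - gu q ≤ (K:ℝ) * z q := by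
      intro q hq
      have hqt : q ∈ Ioc s' t := ⟨hq.1, le_trans hq.2 hr.2⟩
      have hzq := claimA q hqt
      have hqT : q ∈ Icc 0 T := ⟨le_trans hs'Icc.1 hq.1.le, le_trans hq.2 hrT.2⟩
      have hut0 : 0 ≤ ut q := part1 q hqT
      have hzeq : z q = x ε q - ut q := by simp [hz_def]
      have hX0 : 0 ≤ x ε q := by rw [hzeq] at hzq; linarith
      have hfq : f (x ε q) = 0 := hf4 _ hX0
      have hlip : |b (x ε q) - b (ut q)| ≤ (K:ℝ) * |x ε q - ut q| := by
        have := hb.dist_le_mul (x ε q) (ut q)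
        simpa [Real.dist_eq] using this
      have huteq : gu q = b (ut q) := by simp [hgu_def, hut_def]
      calc gx q - gu q = b (x ε q) - b (ut q) := by
            rw [huteq, hgx_def]; simp [hfq]
        _ ≤ |b (x ε q) - b (ut q)| := le_abs_self _
        _ ≤ (K:ℝ) * |x ε q - ut q| := hlip
        _ = (K:ℝ) * z q := by
            rw [← hzeq, abs_of_pos hzq]
    have hIKz : IntervalIntegrable (fun q => (K:ℝ) * z q) volume s' r :=
      hint _ (continuousOn_const.mul hzc) s' hs'T r hrT
    have hIdiff : IntervalIntegrable (fun q => gx q - gu q) volume s' r := hIgx.sub hIgu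
    have hae : (fun q => gx q - gu q) ≤ᵐ[volume.restrict (Icc s' r)]
        fun q => (K:ℝ) * z q := by
      have h1 : ∀ᵐ q ∂(volume.restrict (Icc s' r)), q ∈ Icc s' r :=
        ae_restrict_mem measurableSet_Icc
      have h2 : ∀ᵐ q ∂(volume.restrict (Icc s' r)), q ≠ s' := by
        apply ae_restrict_of_ae
        rw [MeasureTheory.ae_iff]
        have : {q : ℝ | ¬q ≠ s'} = {s'} := by ext q; simp
        rw [this]
        exact Real.volume_singleton
      filter_upwards [h1, h2] with q hq hq'
      exact hpt q ⟨lt_of_le_of_ne hq.1 (Ne.symm hq'), hq.2⟩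
    have hmono_int := intervalIntegral.integral_mono_ae_restrict hr.1 hIdiff hIKz hae
    linarith [key, hmono_int]
  have hzt : z t ≤ 0 :=
    gronwall_int (K:ℝ) s' t K.coe_nonneg z
      (hzc.mono (Icc_subset_Icc hs'Icc.1 ht.2)) hineq t ⟨hs'Icc.2, le_rfl⟩
  have : z t = x ε t - (u t + runNegMax u t) := by simp [hz_def, hut_def, hm_def]
  linarith [hzt, this.symm.le, this.le]
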